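/- Let F(u) := sup_{a>0} log(1 + u(1 − e^{−a})) / ( e^{a} (1 + u(1 − e^{−a})) ). Then 1.1462 · F(1.1462) ≥ 0.1793. In particular, for the hard-core gas (B = 0, C(β) = |B_r|) the new convergence radius ρ* = 1.1462 · F(1.1462)/|B_r| exceeds the classical one ρ*₁ = F(1)/|B_r| ≤ 0.1449/|B_r|. -/

import Mathlib

noncomputable def Fsup (u : ℝ) : ℝ :=
  sSup ((fun a : ℝ => Real.log (1 + u * (1 - Real.exp (-a))) /
      (Real.exp a * (1 + u * (1 - Real.exp (-a))))) '' Set.Ioi 0)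

lemma quartic_le_exp {y : ℝ} (hy : 0 ≤ y) :
    1 + y + y ^ 2 / 2 + y ^ 3 / 6 + y ^ 4 / 24 ≤ Real.exp y := by
  have h := Real.sum_le_exp_of_nonneg hy 5
  rw [Finset.sum_range_succ, Finset.sum_range_succ, Finset.sum_range_succ,
    Finset.sum_range_succ, Finset.sum_range_one] at h
  norm_num [Nat.factorial] at h
  linarith

lemma log_key {s : ℝ} (h1 : 1 < s) (h2 : s < 2) :
    Real.log s ≤ 0.1449 * s / (2 - s) := by
  have hs : 0 < s := by linarith
  have hw : 0 < 2 - s := by linarith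
  set y : ℝ := 0.1449 * s / (2 - s) with hy
  have hy0 : 0 ≤ y := by positivity
  rw [Real.log_le_iff_le_exp hs]
  have hq := quartic_le_exp hy0
  refine le_trans ?_ hq
  have hyw : y * (2 - s) = 0.1449 * s := by
    rw [hy, div_mul_cancel₀ _ hw.ne']
  -- reduce to polynomial inequality
  have key : s * (2 - s) ^ 4 ≤
      (1 + y + y ^ 2 / 2 + y ^ 3 / 6 + y ^ 4 / 24) * (2 - s) ^ 4 := by
    have e1 : y * (2 - s) = 0.1449 * s := hyw
    have e2 : (y * (2 - s)) ^ 2 = (0.1449 * s) ^ 2 := by rw [e1]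
    have e3 : (y * (2 - s)) ^ 3 = (0.1449 * s) ^ 3 := by rw [e1]
    have e4 : (y * (2 - s)) ^ 4 = (0.1449 * s) ^ 4 := by rw [e1]
    have expand : (1 + y + y ^ 2 / 2 + y ^ 3 / 6 + y ^ 4 / 24) * (2 - s) ^ 4 =
        (2 - s) ^ 4 + (y * (2 - s)) * (2 - s) ^ 3 + (y * (2 - s)) ^ 2 * (2 - s) ^ 2 / 2
          + (y * (2 - s)) ^ 3 * (2 - s) / 6 + (y * (2 - s)) ^ 4 / 24 := by ring
    rw [expand, e1]
    nlinarith [sq_nonneg (s - 1.37), sq_nonneg (s - 1), sq_nonneg (2 - s), sq_nonneg ((s - 1.37) * (2 - s)), sq_nonneg ((s - 1.37) * (s - 1)), sq_nonneg ((s-1.37)*(s-1.37)), mul_pos hs hw]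
  have h4 : (0:ℝ) < (2 - s) ^ 4 := by positivity
  exact le_of_mul_le_mul_right (by linarith [key]) h4

lemma mem_bound {u a : ℝ} (hu : 0 ≤ u) (ha : 0 < a) :
    Real.log (1 + u * (1 - Real.exp (-a))) /
      (Real.exp a * (1 + u * (1 - Real.exp (-a)))) ≤ u := by
  have ht1 : Real.exp (-a) < 1 := Real.exp_lt_one_iff.2 (by linarith)
  have ht0 : 0 < Real.exp (-a) := Real.exp_pos _
  have hS1 : 1 ≤ 1 + u * (1 - Real.exp (-a)) := by nlinarith
  have hS0 : 0 < 1 + u * (1 - Real.exp (-a)) := by linarith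
  have hE : 1 < Real.exp a := by simpa using Real.exp_lt_exp.2 ha
  have hL : Real.log (1 + u * (1 - Real.exp (-a))) ≤ u := by
    calc Real.log (1 + u * (1 - Real.exp (-a))) ≤ 1 + u * (1 - Real.exp (-a)) - 1 :=
          Real.log_le_sub_one_of_pos hS0
      _ ≤ u := by nlinarith
  have hL0 : 0 ≤ Real.log (1 + u * (1 - Real.exp (-a))) := Real.log_nonneg hS1
  have hD : 1 ≤ Real.exp a * (1 + u * (1 - Real.exp (-a))) := by nlinarith
  calc Real.log (1 + u * (1 - Real.exp (-a))) / (Real.exp a * (1 + u * (1 - Real.exp (-a))))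
      ≤ Real.log (1 + u * (1 - Real.exp (-a))) / 1 := by
        apply div_le_div_of_nonneg_left hL0 one_pos hD
    _ ≤ u := by simpa using hL

lemma bddAbove_Fset {u : ℝ} (hu : 0 ≤ u) :
    BddAbove ((fun a : ℝ => Real.log (1 + u * (1 - Real.exp (-a))) /
      (Real.exp a * (1 + u * (1 - Real.exp (-a))))) '' Set.Ioi 0) := by
  refine ⟨u, ?_⟩
  rintro x ⟨a, ha, rfl⟩
  exact mem_bound hu ha

lemma sqrt2_lt : Real.sqrt 2 < 1.41421357 := by
  rw [show (1.41421357 : ℝ) = Real.sqrt (1.41421357 ^ 2) by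
    rw [Real.sqrt_sq]; norm_num]
  exact Real.sqrt_lt_sqrt (by norm_num) (by norm_num)

lemma lt_sqrt2 : (1.41421356 : ℝ) < Real.sqrt 2 := by
  rw [show (1.41421356 : ℝ) = Real.sqrt (1.41421356 ^ 2) by
    rw [Real.sqrt_sq]; norm_num]
  exact Real.sqrt_lt_sqrt (by norm_num) (by norm_num)

lemma lower_bound : (0.1793 : ℝ) ≤ 1.1462 * Fsup 1.1462 := by
  have hs2 := sqrt2_lt
  have hs2' := lt_sqrt2
  set t : ℝ := 1 - (Real.sqrt 2 - 1) / 1.1462 with hts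
  have hd1 : (Real.sqrt 2 - 1) / 1.1462 < 0.3613814 := by
    rw [div_lt_iff₀ (by norm_num)]
    nlinarith
  have hd0 : 0 < (Real.sqrt 2 - 1) / 1.1462 := div_pos (by linarith) (by norm_num)
  have ht0 : 0 < t := by rw [hts]; linarith
  have ht1 : t < 1 := by rw [hts]; linarith
  set a : ℝ := -Real.log t with has
  have ha : 0 < a := by
    rw [has]
    simpa using Real.log_neg ht0 ht1
  have hexp : Real.exp (-a) = t := by
    rw [has, neg_neg, Real.exp_log ht0]
  have hS : 1 + 1.1462 * (1 - Real.exp (-a)) = Real.sqrt 2 := by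
    rw [hexp, hts]; field_simp; ring
  have hea : Real.exp a = t⁻¹ := by
    rw [has, Real.exp_neg, Real.exp_log ht0]
  have hmem : Real.log (Real.sqrt 2) / (t⁻¹ * Real.sqrt 2) ∈
      ((fun a : ℝ => Real.log (1 + 1.1462 * (1 - Real.exp (-a))) /
      (Real.exp a * (1 + 1.1462 * (1 - Real.exp (-a))))) '' Set.Ioi 0) := by
    exact ⟨a, ha, by simp only; rw [hS, hea]⟩
  have hle := le_csSup (bddAbove_Fset (by norm_num)) hmem
  have hval : (0.1793 : ℝ) / 1.1462 ≤ Real.log (Real.sqrt 2) / (t⁻¹ * Real.sqrt 2) := by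
    have hlog : Real.log (Real.sqrt 2) = Real.log 2 / 2 := by
      rw [Real.sqrt_eq_rpow, Real.log_rpow (by norm_num)]; ring
    have hl2 : (0.6931471803 : ℝ) < Real.log 2 := Real.log_two_gt_d9
    have hs2pos : (0:ℝ) < Real.sqrt 2 := by linarith
    have heq : Real.log 2 / 2 / (t⁻¹ * Real.sqrt 2) = t * Real.log 2 / (2 * Real.sqrt 2) := by
      field_simp
    rw [hlog, heq, div_le_div_iff₀ (by norm_num) (by positivity)]
    have hA : (0.6386186 : ℝ) < t := by rw [hts]; linarith [hd1]
    have hprod := mul_lt_mul hl2 hA.le (by norm_num) (by linarith : (0:ℝ) ≤ Real.log 2)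
    nlinarith [hprod, hs2]
  have : (0.1793 : ℝ) / 1.1462 ≤ Fsup 1.1462 := le_trans hval hle
  calc (0.1793 : ℝ) = 1.1462 * (0.1793 / 1.1462) := by norm_num
    _ ≤ 1.1462 * Fsup 1.1462 := by linarith

lemma upper_bound : Fsup 1 ≤ 0.1449 := by
  apply Real.sSup_le
  · rintro x ⟨a, ha, rfl⟩
    simp only [Set.mem_Ioi] at ha
    set t := Real.exp (-a) with htdef
    have ht1 : t < 1 := Real.exp_lt_one_iff.2 (by linarith)
    have ht0 : 0 < t := Real.exp_pos _
    have hS : 1 + 1 * (1 - t) = 2 - t := by ring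
    have hea : Real.exp a = t⁻¹ := by
      rw [htdef, ← Real.exp_neg, neg_neg]
    have hs1 : 1 < 2 - t := by linarith
    have hs2 : 2 - t < 2 := by linarith
    have hlog := log_key hs1 hs2
    have hpos : (0:ℝ) < 2 - t := by linarith
    simp only
    rw [← htdef, hS, hea]
    have hden : t⁻¹ * (2 - t) = (2 - t) / t := by ring
    rw [hden, div_div_eq_mul_div, div_le_iff₀ (by positivity)]
    have h2 : 2 - (2 - t) = t := by ring
    rw [h2] at hlog
    calc Real.log (2 - t) * t ≤ (0.1449 * (2 - t) / t) * t := by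
          apply mul_le_mul_of_nonneg_right hlog ht0.le
      _ = 0.1449 * ((2 - t) / t * t) := by ring
      _ = 0.1449 * (2 - t) := by rw [div_mul_cancel₀]; positivity
  · norm_num

theorem stmt_14 :
    (0.1793 : ℝ) ≤ 1.1462 * Fsup 1.1462 ∧
      ∀ vol : ℝ, 0 < vol →
        Fsup 1 / vol ≤ (0.1449 : ℝ) / vol ∧
          Fsup 1 / vol < 1.1462 * Fsup 1.1462 / vol := by
  have hlow := lower_bound
  have hup := upper_bound
  refine ⟨hlow, fun vol hvol => ⟨?_, ?_⟩⟩
  · exact div_le_div_of_nonneg_right hup hvol.le |>.trans_eq rfl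
  · have h : Fsup 1 < 1.1462 * Fsup 1.1462 := by linarith
    exact div_lt_div_of_pos_right h hvol
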